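/- Let M be a Maya diagram with Frobenius symbol (s₁,…,s_p | t₁,…,t_q). Then its Hermite pseudo-Wronskian H_M equals the determinant of the (p+q)×(p+q) matrix whose first p rows are (θ_{s_a}, θ_{s_a+1}, …, θ_{s_a+p+q−1}) for a = 1,…,p and whose last q rows are (H_{t_b}, H_{t_b}′, …, H_{t_b}^{(p+q−1)}) for b = q, q−1, …, 1 (row with index t_q first and row with index t₁ last). In particular, H_M is a polynomial. -/

import Mathlib

/-- A Maya diagram: a set of integers containing only finitely many non-negative
integers and excluding only finitely many negative integers. -/
def IsMaya (M : Set ℤ) : Prop :=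
  {m : ℤ | m ∈ M ∧ 0 ≤ m}.Finite ∧ {m : ℤ | m < 0 ∧ m ∉ M}.Finite

/-- The shifted Maya diagram `M - k = {m - k : m ∈ M}`. -/
def shiftM (M : Set ℤ) (k : ℤ) : Set ℤ := {m : ℤ | m + k ∈ M}

/-- `M₊`, viewed as a subset of ℕ. -/
def MayaPlus (M : Set ℤ) : Set ℕ := {a : ℕ | (a : ℤ) ∈ M}

/-- `M₋ = {-m-1 : m < 0, m ∉ M}`, viewed as a subset of ℕ. -/
def MayaMinus (M : Set ℤ) : Set ℕ := {a : ℕ | (-(a : ℤ) - 1) ∉ M}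

/-- The girth `|M| = #M₋ + #M₊`. -/
noncomputable def girth (M : Set ℤ) : ℕ := (MayaMinus M).ncard + (MayaPlus M).ncard

/-- Physicists' Hermite polynomial `H_n(x) = (-1)^n e^{x²} Dⁿ e^{-x²}`, as a real function. -/
noncomputable def physHermite (n : ℕ) : ℝ → ℝ :=
  fun x => (-1 : ℝ) ^ n * Real.exp (x ^ 2) * iteratedDeriv n (fun y => Real.exp (-y ^ 2)) x

/-- The complex Hermite function `(-1)^n e^{z²} Dⁿ e^{-z²}`. -/
noncomputable def hermiteC (n : ℕ) : ℂ → ℂ :=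
  fun z => (-1 : ℂ) ^ n * Complex.exp (z ^ 2) * iteratedDeriv n (fun w => Complex.exp (-w ^ 2)) z

/-- Conjugate Hermite polynomial `θ_n(x) = i^{-n} H_n(i x)`, as a real function. -/
noncomputable def conjHermite (n : ℕ) : ℝ → ℝ :=
  fun x => (Complex.I ^ (-(n : ℤ)) * hermiteC n (Complex.I * x)).re

/-- The Hermite pseudo-Wronskian of a Maya diagram with Frobenius symbol
`(s₁,…,s_p | t₁,…,t_q)`:
`H_M(x) = e^{-p x²} · Wr[e^{x²}θ_{s₁}, …, e^{x²}θ_{s_p}, H_{t_q}, …, H_{t₁}](x)`.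
Here `s i` is `s_{i+1}` and `t j` is `t_{j+1}` (0-based indexing). -/
noncomputable def pW (p q : ℕ) (s : Fin p → ℕ) (t : Fin q → ℕ) (x : ℝ) : ℝ :=
  Real.exp (-(p : ℝ) * x ^ 2) *
    Matrix.det (Matrix.of fun i k : Fin (p + q) =>
      iteratedDeriv (k : ℕ)
        (fun y => if h : (i : ℕ) < p then Real.exp (y ^ 2) * conjHermite (s ⟨i, h⟩) y
          else physHermite (t ⟨p + q - 1 - (i : ℕ), by have := i.isLt; omega⟩) y) x)

/-- `(s₁,…,s_p | t₁,…,t_q)` is the Frobenius symbol of `M`. -/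
def IsFrobenius {p q : ℕ} (M : Set ℤ) (s : Fin p → ℕ) (t : Fin q → ℕ) : Prop :=
  StrictAnti s ∧ StrictAnti t ∧ Set.range s = MayaMinus M ∧ Set.range t = MayaPlus M

/-- `i_n = #{m ∉ M : m < n}`. -/
noncomputable def iN (M : Set ℤ) (n : ℤ) : ℕ := {m : ℤ | m ∉ M ∧ m < n}.ncard

/-- `j_n = #{m ∈ M : m ≥ n}`. -/
noncomputable def jN (M : Set ℤ) (n : ℤ) : ℕ := {m : ℤ | m ∈ M ∧ n ≤ m}.ncard

/-- `M` is in standard form. -/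
def IsStandard (M : Set ℤ) : Prop := 0 ∉ M ∧ ∀ m : ℤ, m < 0 → m ∈ M

-- auxiliary development
open Polynomial in
noncomputable def Hp : ℕ → Polynomial ℝ
  | 0 => 1
  | n+1 => 2 * X * Hp n - derivative (Hp n)

open Polynomial in
noncomputable def Tp : ℕ → Polynomial ℝ
  | 0 => 1
  | n+1 => 2 * X * Tp n + derivative (Tp n)

lemma hasDerivAt_expneg (x : ℝ) :
    HasDerivAt (fun y : ℝ => Real.exp (-y ^ 2)) (-(2*x) * Real.exp (-x ^ 2)) x := by
  have h1 : HasDerivAt (fun y : ℝ => -y ^ 2) (-(2*x)) x := by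
    simpa using ((hasDerivAt_pow 2 x).fun_neg)
  simpa [mul_comm] using h1.exp

lemma iteratedDeriv_expneg (n : ℕ) (x : ℝ) :
    iteratedDeriv n (fun y : ℝ => Real.exp (-y ^ 2)) x
      = (-1)^n * (Hp n).eval x * Real.exp (-x ^ 2) := by
  induction n generalizing x with
  | zero => simp [Hp]
  | succ n ih =>
    rw [iteratedDeriv_succ]
    have hfun : iteratedDeriv n (fun y : ℝ => Real.exp (-y ^ 2))
        = fun x => (-1)^n * (Hp n).eval x * Real.exp (-x ^ 2) := funext ih
    rw [hfun]
    have hd : HasDerivAt (fun x : ℝ => (-1:ℝ)^n * (Hp n).eval x * Real.exp (-x ^ 2))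
        ((-1)^(n+1) * (Hp (n+1)).eval x * Real.exp (-x ^ 2)) x := by
      have := (((Hp n).hasDerivAt x).const_mul ((-1:ℝ)^n)).fun_mul (hasDerivAt_expneg x)
      refine this.congr_deriv ?_
      simp [Hp, pow_succ]
      ring
    exact hd.deriv

noncomputable def HpC (n : ℕ) : Polynomial ℂ := (Hp n).map (algebraMap ℝ ℂ)
noncomputable def TpC (n : ℕ) : Polynomial ℂ := (Tp n).map (algebraMap ℝ ℂ)

open Polynomial in
lemma HpC_succ (n : ℕ) : HpC (n+1) = 2 * X * HpC n - derivative (HpC n) := by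
  simp [HpC, Hp, Polynomial.derivative_map, Polynomial.map_ofNat]

open Polynomial in
lemma TpC_succ (n : ℕ) : TpC (n+1) = 2 * X * TpC n + derivative (TpC n) := by
  simp [TpC, Tp, Polynomial.derivative_map, Polynomial.map_ofNat]

lemma hasDerivAt_expnegC (x : ℂ) :
    HasDerivAt (fun y : ℂ => Complex.exp (-y ^ 2)) (-(2*x) * Complex.exp (-x ^ 2)) x := by
  have h1 : HasDerivAt (fun y : ℂ => -y ^ 2) (-(2*x)) x := by
    simpa using ((hasDerivAt_pow 2 x).fun_neg)
  simpa [mul_comm] using h1.cexp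

lemma iteratedDeriv_expnegC (n : ℕ) (x : ℂ) :
    iteratedDeriv n (fun y : ℂ => Complex.exp (-y ^ 2)) x
      = (-1)^n * (HpC n).eval x * Complex.exp (-x ^ 2) := by
  induction n generalizing x with
  | zero => simp [HpC, Hp]
  | succ n ih =>
    rw [iteratedDeriv_succ]
    have hfun : iteratedDeriv n (fun y : ℂ => Complex.exp (-y ^ 2))
        = fun x => (-1)^n * (HpC n).eval x * Complex.exp (-x ^ 2) := funext ih
    rw [hfun]
    have hd : HasDerivAt (fun x : ℂ => (-1:ℂ)^n * (HpC n).eval x * Complex.exp (-x ^ 2))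
        ((-1)^(n+1) * (HpC (n+1)).eval x * Complex.exp (-x ^ 2)) x := by
      have := (((HpC n).hasDerivAt x).const_mul ((-1:ℂ)^n)).fun_mul (hasDerivAt_expnegC x)
      refine this.congr_deriv ?_
      simp [HpC_succ, pow_succ]
      ring
    exact hd.deriv




lemma physHermite_eq (n : ℕ) (x : ℝ) : physHermite n x = (Hp n).eval x := by
  simp only [physHermite, iteratedDeriv_expneg]
  have h : Real.exp (x^2) * Real.exp (-x^2) = 1 := by
    rw [← Real.exp_add]; simp
  have h2 : ((-1:ℝ)^n)*((-1:ℝ)^n) = 1 := by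
    rw [← pow_add]; simp [pow_mul, ← two_mul]
  calc (-1:ℝ) ^ n * Real.exp (x ^ 2) * ((-1) ^ n * Polynomial.eval x (Hp n) * Real.exp (-x ^ 2))
      = ((-1:ℝ)^n*(-1)^n) * (Real.exp (x^2) * Real.exp (-x^2)) * Polynomial.eval x (Hp n) := by ring
    _ = Polynomial.eval x (Hp n) := by rw [h, h2]; ring

lemma hermiteC_eq (n : ℕ) (z : ℂ) : hermiteC n z = (HpC n).eval z := by
  simp only [hermiteC, iteratedDeriv_expnegC]
  have h : Complex.exp (z^2) * Complex.exp (-z^2) = 1 := by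
    rw [← Complex.exp_add]; simp
  have h2 : ((-1:ℂ)^n)*((-1:ℂ)^n) = 1 := by
    rw [← pow_add]; simp [pow_mul, ← two_mul]
  calc (-1:ℂ) ^ n * Complex.exp (z ^ 2) * ((-1) ^ n * Polynomial.eval z (HpC n) * Complex.exp (-z ^ 2))
      = ((-1:ℂ)^n*(-1)^n) * (Complex.exp (z^2) * Complex.exp (-z^2)) * Polynomial.eval z (HpC n) := by ring
    _ = Polynomial.eval z (HpC n) := by rw [h, h2]; ring

open Polynomial in
lemma F_eq (n : ℕ) :
    C ((-Complex.I)^n) * (HpC n).comp (C Complex.I * X) = TpC n := by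
  induction n with
  | zero => simp [HpC, TpC, Hp, Tp]
  | succ n ih =>
    rw [HpC_succ, TpC_succ, ← ih]
    rw [derivative_mul, derivative_C, derivative_comp, derivative_mul, derivative_C, derivative_X]
    simp only [sub_comp, mul_comp, X_comp, ofNat_comp, pow_succ]
    ring_nf
    rw [show (-(Complex.I * Complex.I ^ n * (-1:ℂ) ^ n)) = -(Complex.I * (Complex.I ^ n * (-1) ^ n)) from by ring,
      C_neg, C_mul]
    have hI : (C Complex.I : Polynomial ℂ) * C Complex.I = -1 := by
      rw [← C_mul]; simp
    linear_combination (-(2 * X * (HpC n).comp (C Complex.I * X) * C (Complex.I ^ n * (-1:ℂ) ^ n))) * hI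

lemma conjHermite_eq (n : ℕ) (x : ℝ) : conjHermite n x = (Tp n).eval x := by
  have h1 : Complex.I ^ (-(n:ℤ)) = (-Complex.I)^n := by
    rw [zpow_neg, zpow_natCast, ← inv_pow, Complex.inv_I]
  have h2 : (Complex.I ^ (-(n:ℤ)) * hermiteC n (Complex.I * x))
      = ((TpC n).eval (x:ℂ)) := by
    rw [h1, hermiteC_eq, ← F_eq n]
    simp [Polynomial.eval_comp]
  have h3 : (TpC n).eval (x:ℂ) = (((Tp n).eval x : ℝ) : ℂ) := by
    rw [TpC, Polynomial.eval_map]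
    exact Polynomial.eval₂_at_apply (p := Tp n) (algebraMap ℝ ℂ) x
  rw [conjHermite, h2, h3, Complex.ofReal_re]

lemma iteratedDeriv_polyeval (P : Polynomial ℝ) (k : ℕ) :
    iteratedDeriv k (fun y => P.eval y) = fun y => (Polynomial.derivative^[k] P).eval y := by
  induction k with
  | zero => simp
  | succ k ih =>
    rw [iteratedDeriv_succ, ih]
    funext y
    rw [Function.iterate_succ_apply']
    exact Polynomial.deriv _

lemma hasDerivAt_expsq (x : ℝ) :
    HasDerivAt (fun y : ℝ => Real.exp (y ^ 2)) (2 * x * Real.exp (x ^ 2)) x := by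
  have h1 : HasDerivAt (fun y : ℝ => y ^ 2) (2 * x) x := by simpa using hasDerivAt_pow 2 x
  simpa [mul_comm] using h1.exp

lemma deriv_exp_Tp (n : ℕ) :
    deriv (fun y => Real.exp (y ^ 2) * (Tp n).eval y)
      = fun y => Real.exp (y ^ 2) * (Tp (n+1)).eval y := by
  funext y
  have hd : HasDerivAt (fun y => Real.exp (y ^ 2) * (Tp n).eval y)
      (Real.exp (y ^ 2) * (Tp (n+1)).eval y) y := by
    have := (hasDerivAt_expsq y).fun_mul ((Tp n).hasDerivAt y)
    refine this.congr_deriv ?_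
    simp [Tp]
    ring
  exact hd.deriv

lemma iter_exp_Tp (k n : ℕ) :
    iteratedDeriv k (fun y => Real.exp (y ^ 2) * (Tp n).eval y)
      = fun x => Real.exp (x ^ 2) * (Tp (n+k)).eval x := by
  induction k generalizing n with
  | zero => simp
  | succ k ih =>
    rw [iteratedDeriv_succ', deriv_exp_Tp, ih, show n + 1 + k = n + (k+1) from by omega]

lemma iter_exp_conjHermite (k n : ℕ) (x : ℝ) :
    iteratedDeriv k (fun y => Real.exp (y ^ 2) * conjHermite n y) x
      = Real.exp (x ^ 2) * conjHermite (n + k) x := by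
  have : (fun y => Real.exp (y ^ 2) * conjHermite n y)
      = fun y => Real.exp (y ^ 2) * (Tp n).eval y := by
    funext y; rw [conjHermite_eq]
  rw [this, iter_exp_Tp, conjHermite_eq]




/-- The Hermite pseudo-Wronskian of a Maya diagram with Frobenius symbol
`(s₁,…,s_p | t₁,…,t_q)` equals the `(p+q)×(p+q)` determinant whose first `p` rows are
`(θ_{s_a}, θ_{s_a+1}, …, θ_{s_a+p+q−1})` and whose last `q` rows are the derivative rows
`(H_{t_b}, H_{t_b}′, …)` for `b = q, q−1, …, 1`.  In particular `H_M` is a polynomial. -/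
theorem pseudoWronskian_alt_det (M : Set ℤ) (hM : IsMaya M) {p q : ℕ}
    (s : Fin p → ℕ) (t : Fin q → ℕ) (hf : IsFrobenius M s t) :
    (∀ x : ℝ, pW p q s t x =
      Matrix.det (Matrix.of fun i k : Fin (p + q) =>
        if h : (i : ℕ) < p then conjHermite (s ⟨i, h⟩ + (k : ℕ)) x
        else iteratedDeriv (k : ℕ)
          (physHermite (t ⟨p + q - 1 - (i : ℕ), by have := i.isLt; omega⟩)) x)) ∧
    ∃ P : Polynomial ℝ, ∀ x : ℝ, pW p q s t x = P.eval x := by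
  have key : ∀ x : ℝ, pW p q s t x =
      Matrix.det (Matrix.of fun i k : Fin (p + q) =>
        if h : (i : ℕ) < p then conjHermite (s ⟨i, h⟩ + (k : ℕ)) x
        else iteratedDeriv (k : ℕ)
          (physHermite (t ⟨p + q - 1 - (i : ℕ), by have := i.isLt; omega⟩)) x) := by
    intro x
    rw [pW]
    have hM : (Matrix.of fun i k : Fin (p + q) =>
        iteratedDeriv (k : ℕ)
          (fun y => if h : (i : ℕ) < p then Real.exp (y ^ 2) * conjHermite (s ⟨i, h⟩) y
            else physHermite (t ⟨p + q - 1 - (i : ℕ), by have := i.isLt; omega⟩) y) x)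
        = Matrix.of (fun i k : Fin (p + q) =>
          (if (i : ℕ) < p then Real.exp (x ^ 2) else 1) *
          (Matrix.of fun i k : Fin (p + q) =>
            if h : (i : ℕ) < p then conjHermite (s ⟨i, h⟩ + (k : ℕ)) x
            else iteratedDeriv (k : ℕ)
              (physHermite (t ⟨p + q - 1 - (i : ℕ), by have := i.isLt; omega⟩)) x) i k) := by
      ext i k
      by_cases h : (i : ℕ) < p
      · simp only [Matrix.of_apply, dif_pos h, if_pos h]
        exact iter_exp_conjHermite (k : ℕ) (s ⟨i, h⟩) x
      · simp only [Matrix.of_apply, dif_neg h, if_neg h, one_mul]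
    rw [hM, Matrix.det_mul_column]
    have hprod : (∏ i : Fin (p + q), (if (i : ℕ) < p then Real.exp (x ^ 2) else 1))
        = Real.exp (x ^ 2) ^ p := by
      rw [Fin.prod_univ_eq_prod_range (fun i => if i < p then Real.exp (x ^ 2) else 1)]
      rw [Finset.prod_ite, Finset.prod_const, Finset.prod_const_one, mul_one]
      congr 1
      rw [show (Finset.range (p + q)).filter (fun i => i < p) = Finset.range p from by
        ext a; simp; omega]
      exact Finset.card_range p
    rw [hprod, ← mul_assoc, ← Real.exp_nat_mul, ← Real.exp_add,
      show -(p : ℝ) * x ^ 2 + (p : ℝ) * x ^ 2 = 0 from by ring, Real.exp_zero, one_mul]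
  refine ⟨key, ?_⟩
  refine ⟨Matrix.det (Matrix.of fun i k : Fin (p + q) =>
    if h : (i : ℕ) < p then Tp (s ⟨i, h⟩ + (k : ℕ))
    else Polynomial.derivative^[(k : ℕ)]
      (Hp (t ⟨p + q - 1 - (i : ℕ), by have := i.isLt; omega⟩))), fun x => ?_⟩
  rw [key x, ← Polynomial.coe_evalRingHom, RingHom.map_det]
  congr 1
  ext i k
  by_cases h : (i : ℕ) < p
  · simp only [RingHom.mapMatrix_apply, Matrix.map_apply, Matrix.of_apply, dif_pos h,
      Polynomial.coe_evalRingHom]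
    exact conjHermite_eq _ x
  · simp only [RingHom.mapMatrix_apply, Matrix.map_apply, Matrix.of_apply, dif_neg h,
      Polynomial.coe_evalRingHom]
    have hph : physHermite (t ⟨p + q - 1 - (i : ℕ), by have := i.isLt; omega⟩)
        = fun y => (Hp (t ⟨p + q - 1 - (i : ℕ), by have := i.isLt; omega⟩)).eval y := by
      funext y; exact physHermite_eq _ y
    rw [hph, iteratedDeriv_polyeval]
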